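/- For a set X ⊆ 2^ω the following are equivalent: (i) X is perfectly null; (ii) for every perfect set P ⊆ 2^ω, X ∩ P is P-measurable and P ∖ X ≠ ∅; (iii) there exists n ∈ ℕ such that for every binary sequence w of length n and every perfect set P ⊆ [w], the set X ∩ P is P-null. -/

import Mathlib

open MeasureTheory Set Pointwise

/-- The Cantor space `2^ω`, a compact topological group under coordinatewise
addition mod 2. -/
abbrev CS := ℕ → ZMod 2

/-- The basic clopen set `[w]` determined by a finite binary sequence `w`:
all `x ∈ 2^ω` extending `w`. -/
def cyl (w : List (ZMod 2)) : Set CS := {x | ∀ i, i < w.length → x i = w.getD i 0}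

/-- `w` is a branching node of `P`: both `[w⌢0] ∩ P` and `[w⌢1] ∩ P` are nonempty. -/
def Branch (P : Set CS) (w : List (ZMod 2)) : Prop :=
  (cyl (w ++ [0]) ∩ P).Nonempty ∧ (cyl (w ++ [1]) ∩ P).Nonempty

/-- A perfect subset of Cantor space: nonempty, closed, with no isolated points. -/
def PerfSet (P : Set CS) : Prop := Perfect P ∧ P.Nonempty

/-- `ν` is a canonical measure of the perfect set `P`: a Borel probability measure with
`ν P = 1` and `ν [w⌢0] = ν [w⌢1]` for every branching node `w` of `P`. -/
def IsCanonical (P : Set CS) (ν : Measure CS) : Prop :=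
  IsProbabilityMeasure ν ∧ ν P = 1 ∧
    ∀ w : List (ZMod 2), Branch P w → ν (cyl (w ++ [0])) = ν (cyl (w ++ [1]))

/-- `A` is `P`-null: the `μ_P`-outer measure of `A ∩ P` is `0`
(quantified over all canonical measures of `P`). -/
def PNull (P A : Set CS) : Prop := ∀ ν : Measure CS, IsCanonical P ν → ν (A ∩ P) = 0

/-- `A` is `P`-measurable: `A ∩ P` differs from a Borel set by a `P`-null set,
i.e. it is null-measurable with respect to the canonical measure of `P`. -/
def PMeasurable (P A : Set CS) : Prop :=
  ∀ ν : Measure CS, IsCanonical P ν → NullMeasurableSet (A ∩ P) ν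

/-- `X` is perfectly null: `P`-null for every perfect set `P`. -/
def PerfectlyNull (X : Set CS) : Prop := ∀ P, PerfSet P → PNull P X

/-- `μ` is the fair-coin (Lebesgue product) measure on `2^ω`:
a Borel probability measure with `μ [w] = 2^{-|w|}` for every finite binary sequence. -/
def IsFairCoin (μ : Measure CS) : Prop :=
  IsProbabilityMeasure μ ∧ ∀ w : List (ZMod 2), μ (cyl w) = (2 : ENNReal)⁻¹ ^ w.length

/-- The number of branching nodes of `P` that are proper initial segments of `v`. -/
noncomputable def brCount (P : Set CS) (v : List (ZMod 2)) : ℕ :=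
  Set.ncard {u : List (ZMod 2) | u <+: v ∧ u ≠ v ∧ Branch P u}

/-- A balanced perfect set: branching nodes of strictly smaller level
are strictly shorter. -/
def BalancedPerf (P : Set CS) : Prop :=
  PerfSet P ∧ ∀ v w : List (ZMod 2), Branch P v → Branch P w →
    brCount P v < brCount P w → v.length < w.length

/-- A uniformly perfect set: on each length, either all nodes meeting `P` branch,
or none does. -/
def UniformlyPerf (P : Set CS) : Prop :=
  PerfSet P ∧ ∀ n : ℕ,
    (∀ w : List (ZMod 2), w.length = n → (cyl w ∩ P).Nonempty → Branch P w) ∨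
    (∀ w : List (ZMod 2), w.length = n → ¬ Branch P w)

/-- A Silver perfect set: determined by a partial function `ℕ ⇀ 2`
whose domain has infinite complement. -/
def SilverPerf (P : Set CS) : Prop :=
  ∃ f : ℕ → Option (ZMod 2), {n | f n = none}.Infinite ∧
    P = {x | ∀ n b, f n = some b → x n = b}

/-- A Marczewski null (`s₀`) set. -/
def S0Set (X : Set CS) : Prop :=
  ∀ P, PerfSet P → ∃ Q, PerfSet Q ∧ Q ⊆ P ∧ Q ∩ X = ∅

/-- `S` is a Sierpiński set with respect to the measure `μ`: uncountable, with
countable intersection with every `μ`-null set. -/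
def Sierpinski (μ : Measure CS) (S : Set CS) : Prop :=
  ¬ S.Countable ∧ ∀ N : Set CS, μ N = 0 → (S ∩ N).Countable

/-- The interleaving homeomorphism `h : 2^ω × 2^ω → 2^ω`,
`h(x,y) = ⟨x 0, y 0, x 1, y 1, …⟩`. -/
def interleave (p : CS × CS) : CS := fun n => if n % 2 = 0 then p.1 (n / 2) else p.2 (n / 2)

/-- `X` is universally null: outer measure zero with respect to every finite diffused
Borel measure on `2^ω`. -/
def UniversallyNull (X : Set CS) : Prop :=
  ∀ μ : Measure CS, IsFiniteMeasure μ → (∀ x : CS, μ {x} = 0) → μ X = 0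

/-- `X` is strongly null: for every sequence of positive `ε n` there are sets `A n` of
diameter `< ε n` (with respect to the standard metric `d(x,y) = 2^{-min{n : x n ≠ y n}}`,
expressed combinatorially) covering `X`. -/
def StronglyNull (X : Set CS) : Prop :=
  ∀ ε : ℕ → ℝ, (∀ n, 0 < ε n) → ∃ A : ℕ → Set CS,
    (∀ n, ∃ N : ℕ, (2 : ℝ)⁻¹ ^ N < ε n ∧ ∀ x ∈ A n, ∀ y ∈ A n, ∀ i < N, x i = y i) ∧
    X ⊆ ⋃ n, A n

/-- `X` is perfectly null in the transitive sense: for every perfect `P` there is a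
`G_δ` set `G ⊇ X` with `(G + t) ∩ P` being `P`-null for every `t`. -/
def PNPrime (X : Set CS) : Prop :=
  ∀ P, PerfSet P → ∃ G : Set CS, IsGδ G ∧ X ⊆ G ∧
    ∀ t : CS, PNull P ((fun g => g + t) '' G)

namespace PNaux

/-- restriction of x to its first n coordinates, as a list -/
def res (x : CS) (n : ℕ) : List (ZMod 2) := List.ofFn (fun i : Fin n => x i)

@[simp] lemma res_length (x : CS) (n : ℕ) : (res x n).length = n := by
  simp [res]

lemma res_getD (x : CS) {n i : ℕ} (h : i < n) : (res x n).getD i 0 = x i := by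
  rw [List.getD_eq_getElem _ _ (by simpa using h)]
  simp [res]

lemma mem_cyl_res (x : CS) (n : ℕ) : x ∈ cyl (res x n) := by
  intro i hi
  rw [res_getD x (by simpa using hi)]

lemma getD_prefix {l₁ l₂ : List (ZMod 2)} (h : l₁ <+: l₂) {i : ℕ} (hi : i < l₁.length) :
    l₂.getD i 0 = l₁.getD i 0 := by
  obtain ⟨r, rfl⟩ := h
  rw [List.getD_eq_getElem _ _ hi, List.getD_eq_getElem _ _ (by simp; omega),
    List.getElem_append_left hi]

lemma cyl_mono {l₁ l₂ : List (ZMod 2)} (h : l₁ <+: l₂) : cyl l₂ ⊆ cyl l₁ := by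
  intro x hx i hi
  rw [← getD_prefix h hi]
  exact hx i (lt_of_lt_of_le hi h.length_le)

@[simp] lemma getD_append_self (w : List (ZMod 2)) (b : ZMod 2) :
    (w ++ [b]).getD w.length 0 = b := by
  rw [List.getD_eq_getElem _ _ (by simp)]
  simp

lemma mem_cyl_append {w : List (ZMod 2)} {b : ZMod 2} {x : CS} :
    x ∈ cyl (w ++ [b]) ↔ x ∈ cyl w ∧ x w.length = b := by
  constructor
  · intro h
    refine ⟨cyl_mono ⟨[b], rfl⟩ h, ?_⟩
    have := h w.length (by simp)
    simpa using this
  · rintro ⟨h1, h2⟩ i hi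
    simp only [List.length_append, List.length_singleton] at hi
    rcases lt_or_eq_of_le (Nat.lt_succ_iff.mp hi) with hlt | heq
    · rw [getD_prefix ⟨[b], rfl⟩ hlt]
      exact h1 i hlt
    · subst heq; simpa using h2

lemma measurableSet_cyl (w : List (ZMod 2)) : MeasurableSet (cyl w) := by
  have : cyl w = ⋂ i ∈ Finset.range w.length, (fun x : CS => x i) ⁻¹' {w.getD i 0} := by
    ext x; simp [cyl]
  rw [this]
  exact MeasurableSet.biInter (Set.to_countable _)
    (fun i _ => measurable_pi_apply i (measurableSet_singleton _))

lemma isOpen_cyl (w : List (ZMod 2)) : IsOpen (cyl w) := by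
  have : cyl w = ⋂ i ∈ Finset.range w.length, (fun x : CS => x i) ⁻¹' {w.getD i 0} := by
    ext x; simp [cyl]
  rw [this]
  exact isOpen_biInter_finset fun i _ => (continuous_apply i).isOpen_preimage _ (isOpen_discrete _)

lemma isClosed_cyl (w : List (ZMod 2)) : IsClosed (cyl w) := by
  have : cyl w = ⋂ i ∈ Finset.range w.length, (fun x : CS => x i) ⁻¹' {w.getD i 0} := by
    ext x; simp [cyl]
  rw [this]
  exact isClosed_biInter fun i _ => IsClosed.preimage (continuous_apply i) (isClosed_discrete _)

lemma exists_res_subset {x : CS} {U : Set CS} (hU : U ∈ nhds x) : ∃ n, cyl (res x n) ⊆ U := by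
  rw [nhds_pi, Filter.mem_pi] at hU
  obtain ⟨I, hIfin, t, ht, hsub⟩ := hU
  obtain ⟨m, hm⟩ := hIfin.bddAbove
  refine ⟨m + 1, fun y hy => hsub fun i hi => ?_⟩
  have hiy : y i = x i := by
    have := hy i (by simp only [res_length]; exact Nat.lt_succ_of_le (hm hi))
    rwa [res_getD x (Nat.lt_succ_of_le (hm hi))] at this
  rw [hiy]
  exact mem_of_mem_nhds (ht i)

lemma zmod2_cases : ∀ a : ZMod 2, a = 0 ∨ a = 1 := by decide

lemma zmod2_ne : ∀ a b : ZMod 2, a ≠ b → (a = 0 ∧ b = 1) ∨ (a = 1 ∧ b = 0) := by decide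

lemma res_prefix (x : CS) {m n : ℕ} (h : m ≤ n) : res x m <+: res x n := by
  rw [List.prefix_iff_eq_take]
  apply List.ext_getElem (by simp [h])
  intro i h1 h2
  simp [res]

lemma eq_res_of_mem_cyl {x : CS} {w : List (ZMod 2)} (h : x ∈ cyl w) : w = res x w.length := by
  apply List.ext_getElem (by simp)
  intro i h1 h2
  have := h i h1
  rw [List.getD_eq_getElem _ _ h1] at this
  simp [res, ← this]

/-- every point of a perfect set has branching prefixes of arbitrarily large length -/
lemma exists_branch_prefix {P : Set CS} (hP : Perfect P) {x : CS} (hx : x ∈ P) (n : ℕ) :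
    ∃ m, n ≤ m ∧ x ∈ cyl (res x m ++ [x m]) ∧ Branch P (res x m) := by
  have hacc := accPt_iff_nhds.mp (hP.acc x hx)
  obtain ⟨y, ⟨hyc, hyP⟩, hyx⟩ := hacc (cyl (res x n))
    ((isOpen_cyl _).mem_nhds (mem_cyl_res x n))
  have hne : ∃ i, y i ≠ x i := by
    by_contra h
    push_neg at h
    exact hyx (funext h)
  set m := Nat.find hne with hm
  have hmdiff : y m ≠ x m := Nat.find_spec hne
  have hmmin : ∀ i < m, y i = x i := fun i hi => by
    by_contra h; exact Nat.find_min hne hi h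
  have hnm : n ≤ m := by
    by_contra h
    push_neg at h
    exact hmdiff (by rw [hyc m (by simpa using h), res_getD x h])
  have hymem : y ∈ cyl (res x m ++ [y m]) := by
    rw [mem_cyl_append]
    constructor
    · intro i hi
      simp only [res_length] at hi
      rw [res_getD x hi]; exact hmmin i hi
    · simp
  have hxmem : x ∈ cyl (res x m ++ [x m]) := by
    rw [mem_cyl_append]
    exact ⟨mem_cyl_res x m, by simp⟩
  refine ⟨m, hnm, hxmem, ?_⟩
  rcases zmod2_ne _ _ hmdiff with ⟨h0, h1⟩ | ⟨h0, h1⟩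
  · exact ⟨⟨y, by rwa [← h0], hyP⟩, ⟨x, by rwa [← h1], hx⟩⟩
  · exact ⟨⟨x, by rwa [← h1], hx⟩, ⟨y, by rwa [← h0], hyP⟩⟩

lemma canonical_compl_null {P : Set CS} (hP : IsClosed P) {ν : Measure CS}
    (hν : IsCanonical P ν) : ν Pᶜ = 0 := by
  have h1 := hν.1
  rw [measure_compl hP.measurableSet (measure_ne_top ν P), hν.2.1, measure_univ]
  simp

lemma res_succ (x : CS) (n : ℕ) : res x (n + 1) = res x n ++ [x n] := by
  apply List.ext_getElem (by simp)
  intro i h1 h2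
  simp only [res, List.getElem_ofFn]
  rcases Nat.lt_or_ge i n with h | h
  · rw [List.getElem_append_left (by simpa using h)]
    simp [res]
  · have : i = n := by simp at h1; omega
    subst this
    rw [List.getElem_append_right (by simp)]
    simp

lemma singleton_null {P : Set CS} (hP : Perfect P) {ν : Measure CS}
    (hν : IsCanonical P ν) {x : CS} (hx : x ∈ P) : ν {x} = 0 := by
  have hprob := hν.1
  have key : ∀ k : ℕ, ∃ n, ν (cyl (res x n)) ≤ 2⁻¹ ^ k := by
    intro k
    induction k with
    | zero => exact ⟨0, by simpa using prob_le_one⟩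
    | succ k ih =>
      obtain ⟨n, hn⟩ := ih
      obtain ⟨m, hnm, hxm, hbr⟩ := exists_branch_prefix hP hx n
      refine ⟨m + 1, ?_⟩
      have heq := hν.2.2 (res x m) hbr
      -- the two children are disjoint subsets of cyl (res x m)
      have hdisj : Disjoint (cyl (res x m ++ [0])) (cyl (res x m ++ [1])) := by
        rw [Set.disjoint_left]
        intro z h0 h1
        have e0 := (mem_cyl_append.mp h0).2
        have e1 := (mem_cyl_append.mp h1).2
        rw [e0] at e1
        exact absurd e1 (by decide)
      have hsum : ν (cyl (res x m ++ [0])) + ν (cyl (res x m ++ [1])) ≤ ν (cyl (res x m)) := by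
        rw [← measure_union hdisj (measurableSet_cyl _)]
        exact measure_mono (Set.union_subset (cyl_mono ⟨[0], rfl⟩) (cyl_mono ⟨[1], rfl⟩))
      have hmono : ν (cyl (res x m)) ≤ ν (cyl (res x n)) :=
        measure_mono (cyl_mono (res_prefix x hnm))
      set a := ν (cyl (res x m ++ [0])) with ha
      rw [← heq] at hsum
      have h2a : a + a ≤ 2⁻¹ ^ k := le_trans hsum (le_trans hmono hn)
      have hxval : ν (cyl (res x (m+1))) = a := by
        rw [res_succ]
        rcases zmod2_cases (x m) with h | h
        · rw [h]
        · rw [h, ← heq]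
      rw [hxval, pow_succ]
      -- a + a ≤ c → a ≤ c * 2⁻¹  in ENNReal
      calc a = (a + a) * 2⁻¹ := by
              rw [← two_mul, mul_comm 2 a, mul_assoc]
              rw [ENNReal.mul_inv_cancel (by norm_num) (by norm_num), mul_one]
        _ ≤ 2⁻¹ ^ k * 2⁻¹ := by gcongr
  by_contra h0
  obtain ⟨k, hk⟩ := ENNReal.exists_inv_two_pow_lt h0
  obtain ⟨n, hn⟩ := key k
  have : ν {x} ≤ ν (cyl (res x n)) :=
    measure_mono (by simp [Set.singleton_subset_iff, mem_cyl_res])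
  exact absurd (le_trans this hn) (not_le.mpr hk)

lemma countable_null {P : Set CS} (hP : Perfect P) {ν : Measure CS}
    (hν : IsCanonical P ν) {F : Set CS} (hF : F.Countable) (hFP : F ⊆ P) : ν F = 0 := by
  have : F = ⋃ x ∈ F, {x} := by simp
  rw [this]
  exact (measure_biUnion_null_iff hF).mpr fun x hx => singleton_null hP hν (hFP hx)

/-- the fair-coin measure, via Haar measure on the compact group `CS` -/
noncomputable def mu : Measure CS := Measure.addHaarMeasure ⊤

instance : IsProbabilityMeasure mu := by
  constructor
  have := Measure.addHaarMeasure_self (K₀ := (⊤ : TopologicalSpace.PositiveCompacts CS))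
  simpa [mu] using this

instance : mu.IsAddLeftInvariant := by unfold mu; infer_instance

lemma mu_flip (w : List (ZMod 2)) : mu (cyl (w ++ [0])) = mu (cyl (w ++ [1])) := by
  set c : CS := fun n => if n = w.length then 1 else 0 with hc
  have hpre : (fun x => c + x) ⁻¹' cyl (w ++ [1]) = cyl (w ++ [0]) := by
    ext x
    simp only [Set.mem_preimage, mem_cyl_append]
    have hcyl : (c + x) ∈ cyl w ↔ x ∈ cyl w := by
      constructor <;> intro h i hi <;> have := h i hi <;>
        simpa [hc, Pi.add_apply, Nat.ne_of_lt hi] using this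
    have hval : (c + x) w.length = 1 ↔ x w.length = 0 := by
      have h1 : ∀ a : ZMod 2, 1 + a = 1 ↔ a = 0 := by decide
      simpa [hc] using h1 (x w.length)
    rw [hcyl, hval]
  rw [← hpre, measure_preimage_add]

open Classical in
/-- a branching extension of `u` (junk value if none exists) -/
noncomputable def brext (P : Set CS) (u : List (ZMod 2)) : List (ZMod 2) :=
  if h : ∃ v, u <+: v ∧ Branch P v ∧ (cyl v ∩ P).Nonempty then h.choose else u

lemma brext_spec {P : Set CS} (hP : Perfect P) {u : List (ZMod 2)}
    (h : (cyl u ∩ P).Nonempty) :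
    u <+: brext P u ∧ Branch P (brext P u) ∧ (cyl (brext P u) ∩ P).Nonempty := by
  obtain ⟨x, hxc, hxP⟩ := h
  have hex : ∃ v, u <+: v ∧ Branch P v ∧ (cyl v ∩ P).Nonempty := by
    obtain ⟨m, hm, _, hbr⟩ := exists_branch_prefix hP hxP u.length
    refine ⟨res x m, ?_, hbr, ⟨x, mem_cyl_res x m, hxP⟩⟩
    rw [eq_res_of_mem_cyl hxc]
    exact res_prefix x hm
  rw [brext, dif_pos hex]
  exact hex.choose_spec

/-- the `n`-th node of the splitting scheme along `x` -/
noncomputable def nodeA (P : Set CS) (x : CS) : ℕ → List (ZMod 2)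
  | 0 => []
  | n + 1 => brext P (nodeA P x n) ++ [x n]

/-- the canonical embedding of `2^ω` onto a perfect subset of `P` -/
noncomputable def embP (P : Set CS) (x : CS) : CS := fun k => (nodeA P x (k + 1)).getD k 0

variable {P : Set CS}

lemma nodeA_ne (hP : Perfect P) (hne : P.Nonempty) (x : CS) :
    ∀ n, (cyl (nodeA P x n) ∩ P).Nonempty := by
  intro n
  induction n with
  | zero =>
    obtain ⟨y, hy⟩ := hne
    exact ⟨y, fun i hi => absurd hi (by simp [nodeA]), hy⟩
  | succ n ih =>
    obtain ⟨-, hbr, -⟩ := brext_spec hP ih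
    show (cyl (brext P (nodeA P x n) ++ [x n]) ∩ P).Nonempty
    rcases zmod2_cases (x n) with h | h
    · rw [h]; exact hbr.1
    · rw [h]; exact hbr.2

lemma nodeA_prefix_succ (hP : Perfect P) (hne : P.Nonempty) (x : CS) (n : ℕ) :
    nodeA P x n <+: nodeA P x (n + 1) := by
  have h1 := (brext_spec hP (nodeA_ne hP hne x n)).1
  exact h1.trans ⟨[x n], rfl⟩

lemma nodeA_mono (hP : Perfect P) (hne : P.Nonempty) (x : CS) {m n : ℕ} (h : m ≤ n) :
    nodeA P x m <+: nodeA P x n := by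
  induction n with
  | zero => rw [Nat.le_zero.mp h]
  | succ n ih =>
    rcases Nat.lt_or_ge m (n + 1) with h' | h'
    · exact (ih (Nat.lt_succ_iff.mp h')).trans (nodeA_prefix_succ hP hne x n)
    · rw [le_antisymm h h']

lemma nodeA_len (hP : Perfect P) (hne : P.Nonempty) (x : CS) (n : ℕ) :
    n ≤ (nodeA P x n).length := by
  induction n with
  | zero => simp
  | succ n ih =>
    have h1 := (brext_spec hP (nodeA_ne hP hne x n)).1.length_le
    show n + 1 ≤ (brext P (nodeA P x n) ++ [x n]).length
    simp only [List.length_append, List.length_singleton]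
    omega

lemma nodeA_congr {x y : CS} {n : ℕ} (h : ∀ i < n, x i = y i) :
    nodeA P x n = nodeA P y n := by
  induction n with
  | zero => rfl
  | succ n ih =>
    show brext P (nodeA P x n) ++ [x n] = brext P (nodeA P y n) ++ [y n]
    rw [ih (fun i hi => h i (Nat.lt_succ_of_lt hi)), h n (Nat.lt_succ_self n)]

lemma embP_mem_cyl (hP : Perfect P) (hne : P.Nonempty) (x : CS) (n : ℕ) :
    embP P x ∈ cyl (nodeA P x n) := by
  intro k hk
  show (nodeA P x (k + 1)).getD k 0 = (nodeA P x n).getD k 0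
  rcases le_or_gt (k + 1) n with h | h
  · exact (getD_prefix (nodeA_mono hP hne x h)
      (lt_of_lt_of_le (Nat.lt_succ_self k) (nodeA_len hP hne x (k + 1)))).symm
  · exact getD_prefix (nodeA_mono hP hne x h.le) hk

lemma embP_mem (hP : Perfect P) (hne : P.Nonempty) (x : CS) : embP P x ∈ P := by
  apply hP.closed.closure_subset
  rw [mem_closure_iff_nhds]
  intro U hU
  obtain ⟨n, hsub⟩ := exists_res_subset hU
  obtain ⟨y, hyc, hyP⟩ := nodeA_ne hP hne x n
  refine ⟨y, hsub ?_, hyP⟩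
  intro i hi
  simp only [res_length] at hi
  rw [res_getD _ hi]
  have hlen : i < (nodeA P x n).length := lt_of_lt_of_le hi (nodeA_len hP hne x n)
  rw [hyc i hlen]
  exact (embP_mem_cyl hP hne x n i hlen).symm

lemma embP_at_brext (hP : Perfect P) (hne : P.Nonempty) (x : CS) (k : ℕ) :
    embP P x ∈ cyl (brext P (nodeA P x k)) ∧
      embP P x ((brext P (nodeA P x k)).length) = x k := by
  have h := embP_mem_cyl hP hne x (k + 1)
  have : nodeA P x (k + 1) = brext P (nodeA P x k) ++ [x k] := rfl
  rw [this] at h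
  exact ⟨(mem_cyl_append.mp h).1, (mem_cyl_append.mp h).2⟩

lemma embP_inj (hP : Perfect P) (hne : P.Nonempty) : Function.Injective (embP P) := by
  intro x y hxy
  by_contra hne'
  have hd : ∃ i, x i ≠ y i := by
    by_contra h; push_neg at h; exact hne' (funext h)
  set k := Nat.find hd with hk
  have hkd : x k ≠ y k := Nat.find_spec hd
  have hmin : ∀ i < k, x i = y i := fun i hi => by
    by_contra h; exact Nat.find_min hd hi h
  have hnode : nodeA P x k = nodeA P y k := nodeA_congr hmin
  have h1 := (embP_at_brext hP hne x k).2
  have h2 := (embP_at_brext hP hne y k).2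
  rw [← hnode] at h2
  rw [hxy] at h1
  exact hkd (h1.symm.trans h2 ▸ (h1 ▸ h2 ▸ rfl))

lemma embP_cont : Continuous (embP P) := by
  apply continuous_pi
  intro k
  have hfact : (fun x => embP P x k) =
      (fun f : Fin (k + 1) → ZMod 2 =>
        (nodeA P (fun i => if h : i < k + 1 then f ⟨i, h⟩ else 0) (k + 1)).getD k 0) ∘
      (fun x (i : Fin (k + 1)) => x i) := by
    funext x
    show (nodeA P x (k + 1)).getD k 0 = _
    simp only [Function.comp_apply]
    congr 1
    apply nodeA_congr
    intro i hi
    simp [hi]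
  rw [hfact]
  exact (continuous_of_discreteTopology).comp (continuous_pi fun i => continuous_apply (i : ℕ))

lemma embP_meas : Measurable (embP P) := embP_cont.measurable

theorem exists_canonical_sub (hPP : PerfSet P) :
    ∃ Q ν, PerfSet Q ∧ Q ⊆ P ∧ IsCanonical Q ν := by
  obtain ⟨hperf, hne⟩ := hPP
  set Q : Set CS := Set.range (embP P) with hQ
  set ν : Measure CS := mu.map (embP P) with hν
  have hQcl : IsClosed Q := (isCompact_range embP_cont).isClosed
  have hQm : MeasurableSet Q := hQcl.measurableSet
  have hprob : IsProbabilityMeasure ν := Measure.isProbabilityMeasure_map embP_meas.aemeasurable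
  have hQ1 : ν Q = 1 := by
    rw [hν, Measure.map_apply embP_meas hQm, hQ, Set.preimage_range, measure_univ]
  have hQsub : Q ⊆ P := by
    rintro z ⟨x, rfl⟩
    exact embP_mem hperf hne x
  have hQperf : Perfect Q := by
    refine ⟨hQcl, ?_⟩
    rintro z ⟨x, rfl⟩
    rw [accPt_iff_nhds]
    intro U hU
    have hpre : embP P ⁻¹' U ∈ nhds x := embP_cont.continuousAt.preimage_mem_nhds hU
    obtain ⟨n, hsub⟩ := exists_res_subset hpre
    set x' : CS := Function.update x n (x n + 1) with hx'
    have hx'c : x' ∈ cyl (res x n) := by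
      intro i hi
      simp only [res_length] at hi
      rw [res_getD _ hi, hx', Function.update_of_ne (Nat.ne_of_lt hi)]
    have hx'ne : x' ≠ x := by
      intro h
      have := congrFun h n
      rw [hx', Function.update_self] at this
      have hzz : ∀ a : ZMod 2, a + 1 ≠ a := by decide
      exact hzz _ this
    exact ⟨embP P x', ⟨hsub hx'c, ⟨x', rfl⟩⟩, fun h => hx'ne (embP_inj hperf hne h)⟩
  refine ⟨Q, ν, ⟨hQperf, ⟨embP P 0, ⟨0, rfl⟩⟩⟩, hQsub, hprob, hQ1, ?_⟩
  rintro u ⟨⟨z0, hz0c, x, rfl⟩, ⟨z1, hz1c, y, rfl⟩⟩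
  have hxu : embP P x u.length = 0 := (mem_cyl_append.mp hz0c).2
  have hyu : embP P y u.length = 1 := (mem_cyl_append.mp hz1c).2
  have hexu : embP P x ∈ cyl u := cyl_mono ⟨[0], rfl⟩ hz0c
  have heyu : embP P y ∈ cyl u := cyl_mono ⟨[1], rfl⟩ hz1c
  have hd : ∃ i, x i ≠ y i := by
    by_contra h
    push_neg at h
    rw [funext h] at hxu
    rw [hxu] at hyu
    exact absurd hyu (by decide)
  set k := Nat.find hd with hk
  have hkd : x k ≠ y k := Nat.find_spec hd
  have hmin : ∀ i < k, x i = y i := fun i hi => by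
    by_contra h; exact Nat.find_min hd hi h
  have hnode : nodeA P x k = nodeA P y k := nodeA_congr hmin
  set v := brext P (nodeA P x k) with hv
  have hxv := embP_at_brext hperf hne x k
  have hyv := embP_at_brext hperf hne y k
  rw [← hnode] at hyv
  rw [← hv] at hxv hyv
  -- lengths agree
  have hlen : u.length = v.length := by
    rcases lt_trichotomy u.length v.length with h | h | h
    · exfalso
      have h1 : embP P x u.length = v.getD u.length 0 := hxv.1 u.length h
      have h2 : embP P y u.length = v.getD u.length 0 := hyv.1 u.length h
      rw [hxu] at h1; rw [hyu] at h2
      rw [← h1] at h2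
      exact absurd h2 (by decide)
    · exact h
    · exfalso
      have h1 : embP P x v.length = u.getD v.length 0 := hexu v.length h
      have h2 : embP P y v.length = u.getD v.length 0 := heyu v.length h
      rw [hxv.2] at h1
      rw [hyv.2] at h2
      exact hkd (h1.trans h2.symm)
  have huv : u = v := by
    apply List.ext_getElem hlen
    intro i h1 h2
    have e1 : embP P x i = u.getD i 0 := hexu i h1
    have e2 : embP P x i = v.getD i 0 := hxv.1 i h2
    rw [List.getD_eq_getElem _ _ h1] at e1
    rw [List.getD_eq_getElem _ _ h2] at e2
    rw [← e1, ← e2]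
  -- the preimage of each child cylinder is a cylinder in the domain
  have hpre : ∀ b : ZMod 2, embP P ⁻¹' cyl (u ++ [b]) = cyl (res x k ++ [b]) := by
    intro b
    ext x'
    simp only [Set.mem_preimage]
    constructor
    · intro hx'
      have hexu' : embP P x' ∈ cyl u := cyl_mono ⟨[b], rfl⟩ hx'
      have hagree : ∀ i < k, x' i = x i := by
        intro i hik
        by_contra hcon
        have hd' : ∃ i, x' i ≠ x i := ⟨i, hcon⟩
        set j := Nat.find hd' with hj
        have hjd : x' j ≠ x j := Nat.find_spec hd'
        have hjmin : ∀ i' < j, x' i' = x i' := fun i' hi' => by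
          by_contra h'; exact Nat.find_min hd' hi' h'
        have hjk : j < k := lt_of_le_of_lt (Nat.find_min' hd' hcon) hik
        set w' := brext P (nodeA P x j) with hw'
        have hnode' : nodeA P x' j = nodeA P x j := nodeA_congr hjmin
        have hx'w := embP_at_brext hperf hne x' j
        rw [hnode'] at hx'w
        rw [← hw'] at hx'w
        have hxw := embP_at_brext hperf hne x j
        rw [← hw'] at hxw
        -- w'.length < u.length
        have hwlen : w'.length < u.length := by
          have hp1 : nodeA P x (j + 1) <+: nodeA P x k := nodeA_mono hperf hne x hjk
          have hp2 : nodeA P x k <+: v := (brext_spec hperf (nodeA_ne hperf hne x k)).1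
          have := (hp1.trans hp2).length_le
          have hlen1 : (nodeA P x (j + 1)).length = w'.length + 1 := by
            show (w' ++ [x j]).length = w'.length + 1
            simp
          rw [hlen] ; omega
        have q1 : embP P x' w'.length = u.getD w'.length 0 := hexu' w'.length hwlen
        have q2 : embP P x w'.length = u.getD w'.length 0 := hexu w'.length hwlen
        rw [hx'w.2] at q1
        rw [hxw.2] at q2
        exact hjd (q1.trans q2.symm)
      have hnode'' : nodeA P x' k = nodeA P x k := nodeA_congr hagree
      have hx'v := embP_at_brext hperf hne x' k
      rw [hnode''] at hx'v
      rw [← hv] at hx'v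
      have hval : embP P x' u.length = b := (mem_cyl_append.mp hx').2
      have hx'k : x' k = b := by
        rw [← hx'v.2, ← hlen, hval]
      rw [mem_cyl_append]
      refine ⟨?_, by simpa using hx'k⟩
      intro i hi
      simp only [res_length] at hi
      rw [res_getD _ hi]
      exact hagree i hi
    · intro hx'
      obtain ⟨hx'res, hx'k⟩ := mem_cyl_append.mp hx'
      simp only [res_length] at hx'k
      have hagree : ∀ i < k, x' i = x i := by
        intro i hi
        have := hx'res i (by simpa using hi)
        rwa [res_getD _ hi] at this
      have hnode'' : nodeA P x' k = nodeA P x k := nodeA_congr hagree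
      have hstep : nodeA P x' (k + 1) = v ++ [b] := by
        show brext P (nodeA P x' k) ++ [x' k] = v ++ [b]
        rw [hnode'', hx'k, hv]
      have := embP_mem_cyl hperf hne x' (k + 1)
      rw [hstep] at this
      rw [huv]
      exact this
  show ν (cyl (u ++ [0])) = ν (cyl (u ++ [1]))
  rw [hν, Measure.map_apply embP_meas (measurableSet_cyl _),
    Measure.map_apply embP_meas (measurableSet_cyl _), hpre 0, hpre 1]
  exact mu_flip (res x k)

lemma cyl_subset_of_nonempty_inter {a b : List (ZMod 2)}
    (h : (cyl a ∩ cyl b).Nonempty) (hl : b.length ≤ a.length) : cyl a ⊆ cyl b := by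
  obtain ⟨z, hza, hzb⟩ := h
  intro y hy i hi
  rw [hy i (lt_of_lt_of_le hi hl), ← hza i (lt_of_lt_of_le hi hl)]
  exact hzb i hi

lemma perf_inter_cyl {P : Set CS} (hP : Perfect P) (w : List (ZMod 2)) :
    Perfect (P ∩ cyl w) := by
  refine ⟨hP.closed.inter (isClosed_cyl w), ?_⟩
  intro x hx
  rw [accPt_iff_nhds]
  intro U hU
  have hU' : U ∩ cyl w ∈ nhds x := Filter.inter_mem hU ((isOpen_cyl w).mem_nhds hx.2)
  obtain ⟨y, hy, hyx⟩ := accPt_iff_nhds.mp (hP.acc x hx.1) (U ∩ cyl w) hU'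
  exact ⟨y, ⟨hy.1.1, hy.2, hy.1.2⟩, hyx⟩

lemma canonical_restrict {P : Set CS} (hP : Perfect P) {ν : Measure CS} (hν : IsCanonical P ν)
    (w : List (ZMod 2)) (hw : ν (cyl w) ≠ 0) :
    IsCanonical (P ∩ cyl w) ((ν (cyl w))⁻¹ • ν.restrict (cyl w)) := by
  haveI := hν.1
  have hfin : ν (cyl w) ≠ ⊤ := measure_ne_top ν _
  have hPcylval : ν (P ∩ cyl w) = ν (cyl w) := by
    refine le_antisymm (measure_mono Set.inter_subset_right) ?_
    have h1 : cyl w ⊆ (P ∩ cyl w) ∪ Pᶜ := by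
      intro z hz
      by_cases h : z ∈ P
      · exact Or.inl ⟨h, hz⟩
      · exact Or.inr h
    calc ν (cyl w) ≤ ν ((P ∩ cyl w) ∪ Pᶜ) := measure_mono h1
      _ ≤ ν (P ∩ cyl w) + ν Pᶜ := measure_union_le _ _
      _ = ν (P ∩ cyl w) := by rw [canonical_compl_null hP.closed hν, add_zero]
  refine ⟨?_, ?_, ?_⟩
  · constructor
    rw [Measure.smul_apply, Measure.restrict_apply MeasurableSet.univ, Set.univ_inter,
      smul_eq_mul, ENNReal.inv_mul_cancel hw hfin]
  · rw [Measure.smul_apply,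
      Measure.restrict_apply ((hP.closed.measurableSet).inter (measurableSet_cyl w)),
      Set.inter_assoc, Set.inter_self, hPcylval, smul_eq_mul,
      ENNReal.inv_mul_cancel hw hfin]
  · intro u hu
    obtain ⟨⟨z0, hz0c, hz0P, hz0w⟩, ⟨z1, hz1c, hz1P, hz1w⟩⟩ := hu
    have hlen : w.length ≤ u.length := by
      by_contra hcon
      push_neg at hcon
      have e0 : z0 u.length = 0 := by
        have := mem_cyl_append.mp hz0c; exact this.2
      have e1 : z1 u.length = 1 := by
        have := mem_cyl_append.mp hz1c; exact this.2
      have f0 : z0 u.length = w.getD u.length 0 := hz0w u.length hcon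
      have f1 : z1 u.length = w.getD u.length 0 := hz1w u.length hcon
      rw [e0] at f0; rw [e1] at f1
      rw [← f0] at f1
      exact absurd f1 (by decide)
    have hsub0 : cyl (u ++ [0]) ⊆ cyl w :=
      cyl_subset_of_nonempty_inter ⟨z0, hz0c, hz0w⟩ (by simp; omega)
    have hsub1 : cyl (u ++ [1]) ⊆ cyl w :=
      cyl_subset_of_nonempty_inter ⟨z1, hz1c, hz1w⟩ (by simp; omega)
    have hbrP : Branch P u := ⟨⟨z0, hz0c, hz0P⟩, ⟨z1, hz1c, hz1P⟩⟩
    rw [Measure.smul_apply, Measure.smul_apply,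
      Measure.restrict_apply (measurableSet_cyl _), Measure.restrict_apply (measurableSet_cyl _),
      Set.inter_eq_self_of_subset_left hsub0, Set.inter_eq_self_of_subset_left hsub1,
      hν.2.2 u hbrP]

end PNaux

open PNaux in
/-- `X` is perfectly null iff for every perfect `P`, `X ∩ P` is `P`-measurable
and `P \ X ≠ ∅`, iff there exists `n` such that for every binary sequence `w` of length `n`
and every perfect `P ⊆ [w]`, the set `X ∩ P` is `P`-null. -/
theorem stmt_3 (X : Set CS) :
    (PerfectlyNull X ↔ ∀ P, PerfSet P → PMeasurable P X ∧ (P \ X).Nonempty) ∧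
    (PerfectlyNull X ↔ ∃ n : ℕ, ∀ w : List (ZMod 2), w.length = n →
      ∀ P, PerfSet P → P ⊆ cyl w → PNull P X) := by
  constructor
  · -- first equivalence
    constructor
    · intro hX P hP
      refine ⟨fun ν hν => NullMeasurableSet.of_null (hX P hP ν hν), ?_⟩
      obtain ⟨Q, ν, hQ, hQP, hν⟩ := exists_canonical_sub hP
      have h0 : ν (X ∩ Q) = 0 := hX Q hQ ν hν
      rw [Set.nonempty_iff_ne_empty]
      intro hem
      rw [Set.diff_eq_empty] at hem
      have hXQ : X ∩ Q = Q := Set.inter_eq_self_of_subset_right (hQP.trans hem)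
      rw [hXQ, hν.2.1] at h0
      exact one_ne_zero h0
    · intro h P hP ν hν
      by_contra hne0
      haveI := hν.1
      have hm := (h P hP).1 ν hν
      obtain ⟨B, hBsub, hBmeas, hBeq⟩ := hm.exists_measurable_subset_ae_eq
      have hB0 : ν B ≠ 0 := by
        rw [measure_congr hBeq]; exact hne0
      obtain ⟨K, hKB, hKc, hKlt⟩ := hBmeas.exists_isCompact_lt_add (measure_ne_top ν B) hB0
      have hK0 : ν K ≠ 0 := by
        intro h0; rw [h0, zero_add] at hKlt; exact lt_irrefl _ hKlt
      obtain ⟨V, D, hVc, hD, hKeq⟩ := exists_countable_union_perfect_of_isClosed hKc.isClosed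
      have hKP : K ⊆ P := hKB.trans (hBsub.trans Set.inter_subset_right)
      have hDne : D.Nonempty := by
        rw [Set.nonempty_iff_ne_empty]
        intro hDe
        rw [hDe, Set.union_empty] at hKeq
        rw [hKeq] at hK0 hKP
        exact hK0 (countable_null hP.1 hν hVc hKP)
      have hDK : D ⊆ K := hKeq ▸ Set.subset_union_right
      have hDX : D ⊆ X := fun z hz => ((hBsub (hKB (hDK hz))).1)
      obtain ⟨z, hz⟩ := (h D ⟨hD, hDne⟩).2
      exact hz.2 (hDX hz.1)
  · -- second equivalence
    constructor
    · intro hX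
      exact ⟨0, fun w _ P hP _ => hX P hP⟩
    · rintro ⟨n, h⟩ P hP ν hν
      haveI := hν.1
      have hcover : X ∩ P ⊆ ⋃ (w : {l : List (ZMod 2) // l.length = n}), (X ∩ P ∩ cyl w.1) :=
        fun z hz => Set.mem_iUnion.mpr ⟨⟨res z n, res_length z n⟩, hz, mem_cyl_res z n⟩
      have hterms : ∀ w : {l : List (ZMod 2) // l.length = n}, ν (X ∩ P ∩ cyl w.1) = 0 := by
        intro w
        by_cases hPw : (P ∩ cyl w.1).Nonempty
        · have hperfw : Perfect (P ∩ cyl w.1) := perf_inter_cyl hP.1 w.1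
          have hnull : PNull (P ∩ cyl w.1) X :=
            h w.1 w.2 (P ∩ cyl w.1) ⟨hperfw, hPw⟩ Set.inter_subset_right
          by_cases hw0 : ν (cyl w.1) = 0
          · exact le_antisymm
              (le_trans (measure_mono Set.inter_subset_right) (le_of_eq hw0)) zero_le
          · have hcan := canonical_restrict hP.1 hν w.1 hw0
            have h0 := hnull _ hcan
            rw [Measure.smul_apply, smul_eq_mul, mul_eq_zero] at h0
            rcases h0 with h0 | h0
            · exact absurd h0 (ENNReal.inv_ne_zero.mpr (measure_ne_top ν _))
            · rw [Measure.restrict_apply' (measurableSet_cyl _)] at h0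
              have heq : X ∩ (P ∩ cyl w.1) ∩ cyl w.1 = X ∩ P ∩ cyl w.1 := by
                ext z
                simp only [Set.mem_inter_iff]
                tauto
              rwa [heq] at h0
        · rw [Set.not_nonempty_iff_eq_empty] at hPw
          have : X ∩ P ∩ cyl w.1 = ∅ := by
            rw [Set.inter_assoc, hPw, Set.inter_empty]
          rw [this, measure_empty]
      refine le_antisymm (le_trans (measure_mono hcover) (le_of_eq ?_)) zero_le
      exact measure_iUnion_null hterms
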